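/- Let 𝒞 be the partition of the ordinary atoms A(Π) of a ground HEX-program Π into maximal strongly connected components under → ∪ →ₑ, and for C ∈ 𝒞 let Π_C = { r ∈ Π | H(r) ∩ C ≠ ∅ }. If U ≠ ∅ is an unfounded set of Π with respect to a complete assignment A, then there exists a component C ∈ 𝒞 such that U ∩ C is a nonempty unfounded set of Π_C with respect to A. -/
import Mathlib


/-- A ground external atom: a set of input atoms and an oracle function whose
value depends only on the assignment restricted to the input atoms. -/
structure ExtAtom (Atom : Type) where
  inputs : Finset Atom
  eval : (Atom → Bool) → Bool
  dep : ∀ A B : Atom → Bool, (∀ a ∈ inputs, A a = B a) → eval A = eval B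

/-- A ground HEX-rule: head, ordinary positive body, ordinary negative body,
positive external body, negative external body. -/
structure Rule (Atom : Type) where
  head : Finset Atom
  posOrd : Finset Atom
  negOrd : Finset Atom
  posExt : List (ExtAtom Atom)
  negExt : List (ExtAtom Atom)

/-- A ground HEX-program is a set of rules (finiteness is assumed explicitly). -/
abbrev Program (Atom : Type) := Set (Rule Atom)

variable {Atom : Type} [DecidableEq Atom]

/-- The ordinary atoms occurring in a rule. -/
def Rule.atoms (r : Rule Atom) : Finset Atom :=
  r.head ∪ r.posOrd ∪ r.negOrd ∪
    ((r.posExt ++ r.negExt).foldr (fun e s => e.inputs ∪ s) ∅)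

/-- The ordinary atoms `A(Π)` occurring in a program. -/
def progAtoms (P : Program Atom) : Set Atom := ⋃ r ∈ P, (r.atoms : Set Atom)

/-- `A ∪̇¬ X`: set all atoms of `X` to false in `A`. -/
def unplug (A : Atom → Bool) (X : Finset Atom) : Atom → Bool :=
  fun a => A a && !(decide (a ∈ X))

/-- All body literals of `r` are true wrt. the complete assignment `B`. -/
def Rule.bodyTrueAt (r : Rule Atom) (B : Atom → Bool) : Prop :=
  (∀ a ∈ r.posOrd, B a = true) ∧ (∀ a ∈ r.negOrd, B a = false) ∧
  (∀ e ∈ r.posExt, e.eval B = true) ∧ (∀ e ∈ r.negExt, e.eval B = false)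

/-- Some body literal of `r` is false wrt. the complete assignment `B`. -/
def Rule.bodyFalseAt (r : Rule Atom) (B : Atom → Bool) : Prop :=
  (∃ a ∈ r.posOrd, B a = false) ∨ (∃ a ∈ r.negOrd, B a = true) ∨
  (∃ e ∈ r.posExt, e.eval B = false) ∨ (∃ e ∈ r.negExt, e.eval B = true)

/-- `X` is an unfounded set of `P` wrt. the complete assignment `A`
(Definition of unfounded sets for HEX-programs). -/
def isUnfounded (P : Program Atom) (A : Atom → Bool) (X : Finset Atom) : Prop :=
  ∀ r ∈ P, (r.head ∩ X).Nonempty →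
    r.bodyFalseAt A ∨ r.bodyFalseAt (unplug A X) ∨
    ∃ h ∈ r.head, h ∉ X ∧ A h = true

/-- `A` is a (complete) model of `P`. -/
def isModel (A : Atom → Bool) (P : Program Atom) : Prop :=
  ∀ r ∈ P, r.bodyTrueAt A → ∃ h ∈ r.head, A h = true

/-- Ordinary dependency `a → b`. -/
def ordDep (P : Program Atom) (a b : Atom) : Prop :=
  ∃ r ∈ P, a ∈ r.head ∧ b ∈ r.posOrd

/-- External dependency (e-edge) `a →ₑ b`. -/
def eDep (P : Program Atom) (a b : Atom) : Prop :=
  ∃ r ∈ P, a ∈ r.head ∧ ∃ e ∈ r.posExt ++ r.negExt, b ∈ e.inputs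

/-- The relation `→ᵈ = → ∪ →⁻¹ ∪ →ₑ`. -/
def dDep (P : Program Atom) (a b : Atom) : Prop :=
  ordDep P a b ∨ ordDep P b a ∨ eDep P a b

/-- `C` is a cut of the unfounded set `U`: `C ⊆ U`, `C` has no incoming or
internal e-edges from `U`, and there are no ordinary edges between `C` and
`U \ C` in either direction. -/
def isCut (P : Program Atom) (U C : Finset Atom) : Prop :=
  C ⊆ U ∧ (∀ a ∈ C, ∀ b ∈ U, ¬ eDep P b a) ∧
  (∀ a ∈ C, ∀ b ∈ U \ C, ¬ ordDep P a b ∧ ¬ ordDep P b a)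

/-- Some body literal of the rule corresponding to `r` in the guessing program
`Π̂` is false wrt. `B` extended to the compatible extension `Â` of `A`:
ordinary literals are evaluated at `B`, while external replacement atoms obtain
(by compatibility) the oracle value at `A`. -/
def Rule.bodyFalseHat (r : Rule Atom) (A B : Atom → Bool) : Prop :=
  (∃ a ∈ r.posOrd, B a = false) ∨ (∃ a ∈ r.negOrd, B a = true) ∨
  (∃ e ∈ r.posExt, e.eval A = false) ∨ (∃ e ∈ r.negExt, e.eval A = true)

/-- `X` (a set of ordinary atoms) is an unfounded set of the guessing program
`Π̂` wrt. the compatible extension `Â` of `A`.  Since `X` contains only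
ordinary atoms and the guessing rules have only replacement atoms in their
heads, this unfolds to the condition below, where replacement atoms keep their
(compatible) value under `Â ∪̇¬ X`. -/
def isUnfoundedHat (P : Program Atom) (A : Atom → Bool) (X : Finset Atom) : Prop :=
  ∀ r ∈ P, (r.head ∩ X).Nonempty →
    r.bodyFalseHat A A ∨ r.bodyFalseHat A (unplug A X) ∨
    ∃ h ∈ r.head, h ∉ X ∧ A h = true

/-- The set `S` contains a cycle under `→ᵈ` that uses at least one e-edge. -/
def hasECycleIn (P : Program Atom) (S : Set Atom) : Prop :=
  ∃ (n : ℕ) (c : ℕ → Atom),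
    (∀ i ≤ n, dDep P (c i) (c (i+1))) ∧ c 0 = c (n+1) ∧
    (∀ i ≤ n+1, c i ∈ S) ∧ ∃ i ≤ n, eDep P (c i) (c (i+1))

/-- `a` is a cyclic input atom: some `b` with `b →ₑ a` and a path from `a`
to `b` under `→ᵈ`. -/
def cyclicInput (P : Program Atom) (a : Atom) : Prop :=
  ∃ b, eDep P b a ∧ Relation.ReflTransGen (dDep P) a b

/-- The FLP-reduct `fΠ^A`. -/
def flpReduct (P : Program Atom) (A : Atom → Bool) : Program Atom :=
  { r ∈ P | r.bodyTrueAt A }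

/-- `A₁ ≤_Π A₂`. -/
def leP (P : Program Atom) (A₁ A₂ : Atom → Bool) : Prop :=
  ∀ a ∈ progAtoms P, A₁ a = true → A₂ a = true

/-- `A` is an answer set of `P`: a `≤_Π`-minimal model of the FLP-reduct. -/
def isAnswerSet (P : Program Atom) (A : Atom → Bool) : Prop :=
  isModel A (flpReduct P A) ∧
  ∀ A' : Atom → Bool, isModel A' (flpReduct P A) → leP P A' A → leP P A A'

/-- The dependency relation `→ ∪ →ₑ` used for strongly connected components. -/
def dep (P : Program Atom) (a b : Atom) : Prop := ordDep P a b ∨ eDep P a b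

/-- Mutual reachability under `→ ∪ →ₑ`. -/
def sameSCC (P : Program Atom) (a b : Atom) : Prop :=
  Relation.ReflTransGen (dep P) a b ∧ Relation.ReflTransGen (dep P) b a

/-- The strongly connected component of `a` under `→ ∪ →ₑ`. -/
def scc (P : Program Atom) (a : Atom) : Set Atom := { b | sameSCC P a b }

/-- The subprogram `Π_C` associated with a component `C`. -/
def subprog (P : Program Atom) (C : Set Atom) : Program Atom :=
  { r ∈ P | ∃ h ∈ r.head, h ∈ C }

open Classical in
lemma exists_min_reach {α : Type} (R : α → α → Prop)
    (U : Finset α) (hne : U.Nonempty) :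
    ∃ a ∈ U, ∀ b ∈ U, Relation.ReflTransGen R a b → Relation.ReflTransGen R b a := by
  classical
  revert hne
  induction U using Finset.strongInduction with
  | _ U ih =>
    intro hne
    obtain ⟨a, ha⟩ := hne
    by_cases h : ∀ b ∈ U, Relation.ReflTransGen R a b → Relation.ReflTransGen R b a
    · exact ⟨a, ha, h⟩
    · push_neg at h
      obtain ⟨b, hbU, _, hba⟩ := h
      have hsub : U.filter (fun x => ¬ Relation.ReflTransGen R x a) ⊂ U := by
        refine Finset.filter_ssubset.mpr ⟨a, ha, ?_⟩
        simp [Relation.ReflTransGen.refl]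
      obtain ⟨a', ha', hmin⟩ := ih _ hsub ⟨b, Finset.mem_filter.mpr ⟨hbU, hba⟩⟩
      rw [Finset.mem_filter] at ha'
      refine ⟨a', ha'.1, fun c hcU hac => ?_⟩
      by_contra hca
      have hc' : ¬ Relation.ReflTransGen R c a := fun hc =>
        ha'.2 (hac.trans hc)
      exact hca (hmin c (Finset.mem_filter.mpr ⟨hcU, hc'⟩) hac)

open Classical in
/-- Program decomposition: if `U ≠ ∅` is an unfounded set of `Π` wrt. `A`,
then for some strongly connected component `C = scc P a` of the partition of
`A(Π)` under `→ ∪ →ₑ`, the set `U ∩ C` is a nonempty unfounded set of the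
subprogram `Π_C` wrt. `A`. -/
theorem program_decomposition (P : Program Atom) (hP : P.Finite)
    (A : Atom → Bool) (U : Finset Atom) (hne : U.Nonempty)
    (hUatoms : ↑U ⊆ progAtoms P)
    (hU : isUnfounded P A U) :
    ∃ a ∈ progAtoms P,
      (U.filter (fun x => x ∈ scc P a)).Nonempty ∧
      isUnfounded (subprog P (scc P a)) A
        (U.filter (fun x => x ∈ scc P a)) := by
  obtain ⟨a, haU, hmin⟩ := exists_min_reach (dep P) U hne
  refine ⟨a, hUatoms haU, ⟨a, Finset.mem_filter.mpr
    ⟨haU, ⟨Relation.ReflTransGen.refl, Relation.ReflTransGen.refl⟩⟩⟩, ?_⟩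
  set UC := U.filter (fun x => x ∈ scc P a) with hUCdef
  have hUCsub : ∀ x, x ∈ UC → x ∈ U := fun x hx => (Finset.mem_filter.mp hx).1
  intro r hr hhead
  obtain ⟨h, hh⟩ := hhead
  rw [Finset.mem_inter] at hh
  have hhH : h ∈ r.head := hh.1
  have hhUC := Finset.mem_filter.mp hh.2
  have hhU : h ∈ U := hhUC.1
  have hhC : sameSCC P a h := hhUC.2
  have hrP : r ∈ P := hr.1
  -- dep-successors of h lying in U are in UC
  have key : ∀ b, dep P h b → b ∈ U → b ∈ UC := by
    intro b hdep hbU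
    have hab : Relation.ReflTransGen (dep P) a b := hhC.1.tail hdep
    exact Finset.mem_filter.mpr ⟨hbU, ⟨hab, hmin b hbU hab⟩⟩
  -- agreement of unplugs on dep-successors of h
  have agree : ∀ b, dep P h b → unplug A U b = unplug A UC b := by
    intro b hdep
    by_cases hbU : b ∈ U
    · have hbUC := key b hdep hbU
      simp [unplug, hbU, hbUC]
    · have hbUC : b ∉ UC := fun hx => hbU (hUCsub b hx)
      simp [unplug, hbU, hbUC]
  rcases hU r hrP ⟨h, Finset.mem_inter.mpr ⟨hhH, hhU⟩⟩ with h1 | h2 | h3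
  · exact Or.inl h1
  · -- body false wrt unplug A U; transfer to unplug A UC
    rcases h2 with ⟨x, hx, hval⟩ | ⟨x, hx, hval⟩ | ⟨e, he, hval⟩ | ⟨e, he, hval⟩
    · -- positive ordinary
      by_cases hAx : A x = true
      · have hxU : x ∈ U := by
          by_contra hxU
          simp [unplug, hAx, hxU] at hval
        have hdep : dep P h x := Or.inl ⟨r, hrP, hhH, hx⟩
        have hxUC := key x hdep hxU
        exact Or.inr (Or.inl (Or.inl ⟨x, hx, by simp [unplug, hxUC]⟩))
      · exact Or.inl (Or.inl ⟨x, hx, by simpa using hAx⟩)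
    · -- negative ordinary
      have hAx : A x = true := by
        by_contra hAx
        simp [unplug] at hval
        exact hAx hval.1
      have hxU : x ∉ U := by
        intro hxU
        simp [unplug, hxU] at hval
      have hxUC : x ∉ UC := fun hm => hxU (hUCsub x hm)
      exact Or.inr (Or.inl (Or.inr (Or.inl ⟨x, hx, by simp [unplug, hAx, hxUC]⟩)))
    · -- positive external
      have heq : e.eval (unplug A U) = e.eval (unplug A UC) := by
        refine e.dep _ _ (fun b hb => agree b ?_)
        exact Or.inr ⟨r, hrP, hhH, e, List.mem_append.mpr (Or.inl he), hb⟩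
      exact Or.inr (Or.inl (Or.inr (Or.inr (Or.inl ⟨e, he, heq ▸ hval⟩))))
    · -- negative external
      have heq : e.eval (unplug A U) = e.eval (unplug A UC) := by
        refine e.dep _ _ (fun b hb => agree b ?_)
        exact Or.inr ⟨r, hrP, hhH, e, List.mem_append.mpr (Or.inr he), hb⟩
      exact Or.inr (Or.inl (Or.inr (Or.inr (Or.inr ⟨e, he, heq ▸ hval⟩))))
  · obtain ⟨h', hh', hh'U, hh'A⟩ := h3
    exact Or.inr (Or.inr ⟨h', hh', fun hm => hh'U (hUCsub h' hm), hh'A⟩)
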